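/- Let σ be a nonempty permutation of length m whose last entry is not 1. Then for all n ≥ 0, I_n(3412, (m+1)σ) = I_n(3412, (m+2)σ^{+1}1) as sets; here (m+1)σ denotes the permutation of length m+1 whose first entry is m+1 followed by σ, and (m+2)σ^{+1}1 denotes the permutation of length m+2 whose first entry is m+2, followed by σ with every entry increased by 1, followed by 1. -/

import Mathlib

/-- `π` (a sequence of length `n` with values in `Fin n`) contains the pattern `σ` of length `k`:
there is a strictly increasing choice of positions on which `π` has the same pairwise
comparisons as `σ`. -/
def Contains {n k : ℕ} (π : Fin n → Fin n) (σ : Fin k → Fin k) : Prop :=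
  ∃ f : Fin k → Fin n, StrictMono f ∧ ∀ a b : Fin k, σ a < σ b ↔ π (f a) < π (f b)

/-- `π` avoids the pattern `σ`. -/
def Avoids {n k : ℕ} (π : Fin n → Fin n) (σ : Fin k → Fin k) : Prop :=
  ¬ Contains π σ

/-- The pattern 3412, written 0-indexed. -/
def pat3412 : Fin 4 → Fin 4 := ![2, 3, 0, 1]

/-- The permutation `(m+1) σ` of length `m+1` (0-indexed): first entry `m+1`, then `σ`. -/
def extTop {m : ℕ} (σ : Fin m → Fin m) : Fin (m + 1) → Fin (m + 1) := fun i =>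
  if h0 : (i : ℕ) = 0 then ⟨m, by omega⟩
  else
    have hlt : (i : ℕ) - 1 < m := by have := i.isLt; omega
    ⟨(σ ⟨(i : ℕ) - 1, hlt⟩ : ℕ), by have := (σ ⟨(i : ℕ) - 1, hlt⟩).isLt; omega⟩

/-- The permutation `(m+2) σ^{+1} 1` of length `m+2` (written 0-indexed): first entry `m+2`,
then `σ` with every entry increased by `1`, then a final entry `1`. -/
def extBoth {m : ℕ} (σ : Fin m → Fin m) : Fin (m + 2) → Fin (m + 2) := fun i =>
  if h0 : (i : ℕ) = 0 then ⟨m + 1, by omega⟩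
  else if h1 : (i : ℕ) ≤ m then
    have hlt : (i : ℕ) - 1 < m := by omega
    ⟨(σ ⟨(i : ℕ) - 1, hlt⟩ : ℕ) + 1, by have := (σ ⟨(i : ℕ) - 1, hlt⟩).isLt; omega⟩
  else ⟨0, by omega⟩

lemma contains_pat3412_of {n : ℕ} (π : Fin n → Fin n) (a c b d : Fin n)
    (h1 : a < c) (h2 : c < b) (h3 : b < d)
    (v1 : π b < π d) (v2 : π d < π a) (v3 : π a < π c) :
    Contains π pat3412 := by
  refine ⟨![a, c, b, d], ?_, ?_⟩
  · rw [Fin.strictMono_iff_lt_succ]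
    intro i
    fin_cases i <;> simp [Fin.castSucc, Fin.castAdd, Fin.castLE, Fin.succ, Matrix.cons_val_succ, h1, h2, h3]
  · intro x y
    have k1 : π b < π a := v1.trans v2
    have k2 : π b < π c := k1.trans v3
    have k3 : π d < π c := v2.trans v3
    fin_cases x <;> fin_cases y <;>
      simp [pat3412, Fin.lt_def, le_of_lt, v1, v2, v3, k1, k2, k3,
        not_lt.2 (le_of_lt v1), not_lt.2 (le_of_lt v2), not_lt.2 (le_of_lt v3),
        not_lt.2 (le_of_lt k1), not_lt.2 (le_of_lt k2), not_lt.2 (le_of_lt k3)] <;> decide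

section helpers
variable {m : ℕ} (σ : Fin m → Fin m)

lemma extTop_zero_val : ((extTop σ 0 : Fin (m+1)) : ℕ) = m := by
  simp [extTop]

lemma extTop_succ_val (j : Fin m) : ((extTop σ j.succ : Fin (m+1)) : ℕ) = σ j := by
  simp [extTop, Fin.val_succ]

lemma extBoth_zero_val (a : Fin (m+2)) (h : (a : ℕ) = 0) :
    ((extBoth σ a : Fin (m+2)) : ℕ) = m + 1 := by
  simp [extBoth, h]

lemma extBoth_mid_val (a : Fin (m+2)) (h0 : (a : ℕ) ≠ 0) (h1 : (a : ℕ) ≤ m)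
    (hlt : (a : ℕ) - 1 < m) :
    ((extBoth σ a : Fin (m+2)) : ℕ) = (σ ⟨(a : ℕ) - 1, hlt⟩ : ℕ) + 1 := by
  simp [extBoth, h0, h1]

lemma extBoth_last_val (a : Fin (m+2)) (h : ¬ (a : ℕ) ≤ m) :
    ((extBoth σ a : Fin (m+2)) : ℕ) = 0 := by
  have h0 : (a : ℕ) ≠ 0 := by omega
  simp [extBoth, h0, h]

end helpers

section occ
variable {n m : ℕ} (π : Fin n → Fin n) (σ : Fin m → Fin m)

/-- occurrence data for `extTop σ`. -/
def OccT (p : Fin n) (q : Fin m → Fin n) : Prop :=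
  StrictMono q ∧ (∀ j, p < q j) ∧ (∀ j k, σ j < σ k ↔ π (q j) < π (q k)) ∧
    (∀ j, π (q j) < π p)

variable {π σ}

lemma occT_of_contains (h : Contains π (extTop σ)) : ∃ p q, OccT π σ p q := by
  obtain ⟨f, hmono, hiff⟩ := h
  refine ⟨f 0, fun j => f j.succ, ?_, ?_, ?_, ?_⟩
  · intro j k hjk
    exact hmono (Fin.succ_lt_succ_iff.mpr hjk)
  · intro j
    exact hmono (Fin.succ_pos j)
  · intro j k
    rw [← hiff j.succ k.succ, Fin.lt_def, Fin.lt_def, extTop_succ_val, extTop_succ_val]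
  · intro j
    rw [← hiff j.succ 0, Fin.lt_def, extTop_succ_val, extTop_zero_val]
    exact (σ j).isLt

lemma contains_extBoth_of_occT {p : Fin n} {q : Fin m → Fin n} {r : Fin n}
    (h : OccT π σ p q) (hqr : ∀ j, q j < r) (hpr : p < r)
    (hvr : ∀ j, π r < π (q j)) (hvpr : π r < π p) :
    Contains π (extBoth σ) := by
  obtain ⟨hqmono, hpq, hiff, hmax⟩ := h
  set g : Fin (m+2) → Fin n := fun a =>
    if h0 : (a : ℕ) = 0 then p
    else if h1 : (a : ℕ) ≤ m then q ⟨(a : ℕ) - 1, by omega⟩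
    else r with hg
  have hg0 : ∀ a : Fin (m+2), (a : ℕ) = 0 → g a = p := by
    intro a ha; simp only [hg]; rw [dif_pos ha]
  have hgm : ∀ (a : Fin (m+2)) (hlt : (a : ℕ) - 1 < m), (a : ℕ) ≠ 0 → (a : ℕ) ≤ m →
      g a = q ⟨(a : ℕ) - 1, hlt⟩ := by
    intro a hlt h0 h1; simp only [hg]; rw [dif_neg h0, dif_pos h1]
  have hgr : ∀ a : Fin (m+2), ¬ (a : ℕ) ≤ m → g a = r := by
    intro a ha
    have h0 : (a : ℕ) ≠ 0 := by omega
    simp only [hg]; rw [dif_neg h0, dif_neg ha]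
  refine ⟨g, ?_, ?_⟩
  · intro a b hab
    rw [Fin.lt_def] at hab
    by_cases hb0 : (b : ℕ) = 0
    · omega
    by_cases ha0 : (a : ℕ) = 0
    · rw [hg0 a ha0]
      by_cases hb1 : (b : ℕ) ≤ m
      · rw [hgm b (by omega) hb0 hb1]; exact hpq _
      · rw [hgr b hb1]; exact hpr
    by_cases ha1 : (a : ℕ) ≤ m
    · rw [hgm a (by omega) ha0 ha1]
      by_cases hb1 : (b : ℕ) ≤ m
      · rw [hgm b (by omega) hb0 hb1]
        exact hqmono (by rw [Fin.mk_lt_mk]; omega)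
      · rw [hgr b hb1]; exact hqr _
    · exfalso; have := b.isLt; omega
  · intro a b
    by_cases ha0 : (a : ℕ) = 0
    · by_cases hb0 : (b : ℕ) = 0
      · rw [Fin.lt_def, extBoth_zero_val σ a ha0, extBoth_zero_val σ b hb0,
          hg0 a ha0, hg0 b hb0]
        simp
      by_cases hb1 : (b : ℕ) ≤ m
      · have hlt : (b : ℕ) - 1 < m := by omega
        rw [Fin.lt_def, extBoth_zero_val σ a ha0, extBoth_mid_val σ b hb0 hb1 hlt,
          hg0 a ha0, hgm b hlt hb0 hb1]
        have := (σ ⟨(b : ℕ) - 1, hlt⟩).isLt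
        exact iff_of_false (by omega) (not_lt.2 (le_of_lt (hmax _)))
      · rw [Fin.lt_def, extBoth_zero_val σ a ha0, extBoth_last_val σ b hb1,
          hg0 a ha0, hgr b hb1]
        exact iff_of_false (by omega) (not_lt.2 (le_of_lt hvpr))
    by_cases ha1 : (a : ℕ) ≤ m
    · have hlta : (a : ℕ) - 1 < m := by omega
      by_cases hb0 : (b : ℕ) = 0
      · rw [Fin.lt_def, extBoth_mid_val σ a ha0 ha1 hlta, extBoth_zero_val σ b hb0,
          hgm a hlta ha0 ha1, hg0 b hb0]
        have := (σ ⟨(a : ℕ) - 1, hlta⟩).isLt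
        exact iff_of_true (by omega) (hmax _)
      by_cases hb1 : (b : ℕ) ≤ m
      · have hltb : (b : ℕ) - 1 < m := by omega
        rw [Fin.lt_def, extBoth_mid_val σ a ha0 ha1 hlta, extBoth_mid_val σ b hb0 hb1 hltb,
          hgm a hlta ha0 ha1, hgm b hltb hb0 hb1]
        rw [← hiff, Fin.lt_def]
        omega
      · rw [Fin.lt_def, extBoth_mid_val σ a ha0 ha1 hlta, extBoth_last_val σ b hb1,
          hgm a hlta ha0 ha1, hgr b hb1]
        exact iff_of_false (by omega) (not_lt.2 (le_of_lt (hvr _)))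
    · by_cases hb0 : (b : ℕ) = 0
      · rw [Fin.lt_def, extBoth_last_val σ a ha1, extBoth_zero_val σ b hb0,
          hgr a ha1, hg0 b hb0]
        exact iff_of_true (by omega) hvpr
      by_cases hb1 : (b : ℕ) ≤ m
      · have hltb : (b : ℕ) - 1 < m := by omega
        rw [Fin.lt_def, extBoth_last_val σ a ha1, extBoth_mid_val σ b hb0 hb1 hltb,
          hgr a ha1, hgm b hltb hb0 hb1]
        have := (σ ⟨(b : ℕ) - 1, hltb⟩).isLt
        exact iff_of_true (by omega) (hvr _)
      · rw [Fin.lt_def, extBoth_last_val σ a ha1, extBoth_last_val σ b hb1,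
          hgr a ha1, hgr b hb1]
        simp
end occ

section easydir
variable {n m : ℕ} {π : Fin n → Fin n} {σ : Fin m → Fin m}

lemma extTop_zero_val' (a : Fin (m+1)) (h : (a : ℕ) = 0) :
    ((extTop σ a : Fin (m+1)) : ℕ) = m := by
  simp [extTop, h]

lemma extTop_mid_val (a : Fin (m+1)) (h0 : (a : ℕ) ≠ 0) (hlt : (a : ℕ) - 1 < m) :
    ((extTop σ a : Fin (m+1)) : ℕ) = σ ⟨(a : ℕ) - 1, hlt⟩ := by
  simp [extTop, h0]

lemma contains_extTop_of_contains_extBoth (h : Contains π (extBoth σ)) :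
    Contains π (extTop σ) := by
  obtain ⟨f, hmono, hiff⟩ := h
  refine ⟨fun a => f a.castSucc, fun a b hab => hmono (by simpa using hab), fun a b => ?_⟩
  rw [← hiff a.castSucc b.castSucc, Fin.lt_def, Fin.lt_def]
  have hca : ((a.castSucc : Fin (m+2)) : ℕ) = (a : ℕ) := rfl
  have hcb : ((b.castSucc : Fin (m+2)) : ℕ) = (b : ℕ) := rfl
  by_cases ha0 : (a : ℕ) = 0
  · by_cases hb0 : (b : ℕ) = 0
    · rw [extTop_zero_val' a ha0, extTop_zero_val' b hb0,
        extBoth_zero_val σ _ (hca.trans ha0), extBoth_zero_val σ _ (hcb.trans hb0)]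
      omega
    · have hltb : (b : ℕ) - 1 < m := by have := b.isLt; omega
      rw [extTop_zero_val' a ha0, extTop_mid_val b hb0 hltb,
        extBoth_zero_val σ _ (hca.trans ha0),
        extBoth_mid_val σ _ (by omega) (by have := b.isLt; omega) (by omega)]
      simp only [Fin.coe_castSucc]
      have := (σ ⟨(b : ℕ) - 1, hltb⟩).isLt
      omega
  · have hlta : (a : ℕ) - 1 < m := by have := a.isLt; omega
    by_cases hb0 : (b : ℕ) = 0
    · rw [extTop_mid_val a ha0 hlta, extTop_zero_val' b hb0,
        extBoth_mid_val σ _ (by omega) (by have := a.isLt; omega) (by omega),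
        extBoth_zero_val σ _ (hcb.trans hb0)]
      simp only [Fin.coe_castSucc]
      have := (σ ⟨(a : ℕ) - 1, hlta⟩).isLt
      omega
    · have hltb : (b : ℕ) - 1 < m := by have := b.isLt; omega
      rw [extTop_mid_val a ha0 hlta, extTop_mid_val b hb0 hltb,
        extBoth_mid_val σ _ (by omega) (by have := a.isLt; omega) (by omega),
        extBoth_mid_val σ _ (by omega) (by have := b.isLt; omega) (by omega)]
      simp only [Fin.coe_castSucc]
      omega

end easydir

lemma hard {n m : ℕ} (hm : 1 ≤ m) {π : Fin n → Fin n} {σ : Fin m → Fin m}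
    (hinv : Function.Involutive π) (h3412 : ¬ Contains π pat3412)
    (hbij : Function.Bijective σ) (hlast : (σ ⟨m - 1, Nat.sub_lt hm Nat.one_pos⟩ : ℕ) ≠ 0)
    (hcont : Contains π (extTop σ)) : Contains π (extBoth σ) := by
  classical
  -- the minimum index of σ
  obtain ⟨s, hs⟩ := hbij.2 ⟨0, by omega⟩
  have hsval : (σ s : ℕ) = 0 := by rw [hs]
  set jl : Fin m := ⟨m - 1, by omega⟩ with hjl
  have hsne : (s : ℕ) ≠ m - 1 := by
    intro h
    apply hlast
    have hjs : jl = s := by apply Fin.ext; simp [hjl]; omega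
    rw [hjs, hsval]
  have hsjl : s < jl := by
    rw [Fin.lt_def]
    have := s.isLt
    simp only [hjl]
    omega
  -- choose the occurrence with minimal first position
  have hne : ∃ x : ℕ, ∃ p q, OccT π σ p q ∧ (p : ℕ) = x := by
    obtain ⟨p, q, h⟩ := occT_of_contains hcont
    exact ⟨p, p, q, h, rfl⟩
  obtain ⟨p, q, hocc, hpval⟩ := Nat.find_spec hne
  have hminP : ∀ (p' : Fin n) (q' : Fin m → Fin n), OccT π σ p' q' → ¬ (p' < p) := by
    intro p' q' h' hlt
    rw [Fin.lt_def, hpval] at hlt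
    exact Nat.find_min hne hlt ⟨p', q', h', rfl⟩
  obtain ⟨hqmono, hpq, hiff, hmax⟩ := hocc
  have hMp : π (π p) = p := hinv p
  have hminv : ∀ j, j ≠ s → π (q s) < π (q j) := by
    intro j hj
    refine (hiff s j).1 ?_
    rw [Fin.lt_def, hsval]
    rcases Nat.eq_zero_or_pos (σ j : ℕ) with h | h
    · exact absurd (hbij.1 (Fin.ext (h.trans hsval.symm))) hj
    · exact h
  have hqjs : π (π (q s)) = q s := hinv (q s)
  -- Claim 1 : p < π (q s)
  have claim1 : p < π (q s) := by
    rcases lt_trichotomy (π (q s)) p with hlt | heq | hgt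
    · -- π (q s) < p : derive contradictions
      rcases lt_trichotomy (q s) (π p) with hc | hc | hc
      · -- q s < M
        rcases lt_trichotomy p (π p) with hd | hd | hd
        · -- p < M : crossing (π (q s), p, q s, π p)
          exact absurd (contains_pat3412_of π (π (q s)) p (q s) (π p)
            hlt (hpq s) hc (by rw [hMp]; exact hlt) (by rw [hMp, hqjs]; exact hpq s)
            (by rw [hqjs]; exact hc)) h3412
        · -- p = M : then q s < p, contradiction with p < q s
          exfalso
          rw [← hd] at hc
          exact lt_asymm (hpq s) hc
        · -- M < p : occurrence starting at M contradicts minimality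
          exact absurd hd (hminP (π p) q ⟨hqmono, fun j => lt_trans hd (hpq j), hiff,
            fun j => by rw [hMp]; exact lt_trans (hmax j) hd⟩)
      · -- q s = M : then π (q s) = p, contradiction
        have : π (q s) = p := by rw [hc, hMp]
        exact absurd this (ne_of_lt hlt)
      · -- M < q s : occurrence starting at π (q s) contradicts minimality
        exfalso
        refine hminP (π (q s)) q ⟨hqmono, fun j => lt_trans hlt (hpq j), hiff,
          fun j => ?_⟩ hlt
        rw [hqjs]; exact lt_trans (hmax j) hc
    · -- π (q s) = p : crossing (p, π (q jl), q s, q jl)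
      have hMqs : π p = q s := by rw [← heq, hqjs]
      have h1 : p < π (q jl) := by rw [← heq]; exact hminv jl (ne_of_gt hsjl)
      have h2 : π (q jl) < q s := by rw [← hMqs]; exact hmax jl
      have h3 : q s < q jl := hqmono hsjl
      exact absurd (contains_pat3412_of π p (π (q jl)) (q s) (q jl)
        h1 h2 h3 (by rw [heq]; exact h1) (by rw [hMqs]; exact h2)
        (by rw [hMqs, hinv (q jl)]; exact h3)) h3412
    · exact hgt
  have hpv : ∀ j, p < π (q j) := by
    intro j
    by_cases hj : j = s
    · rw [hj]; exact claim1
    · exact lt_trans claim1 (hminv j hj)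
  -- Claim 2 : q jl < π p
  have claim2 : q jl < π p := by
    rcases lt_trichotomy (π p) (q jl) with hc | hc | hc
    · -- crossing (p, π (q jl), π p, q jl)
      exact absurd (contains_pat3412_of π p (π (q jl)) (π p) (q jl)
        (hpv jl) (hmax jl) hc (by rw [hMp]; exact hpv jl)
        (hmax jl) (by rw [hinv (q jl)]; exact hc)) h3412
    · exfalso
      have : p = π (q jl) := by rw [← hMp, hc]
      exact (ne_of_lt (hpv jl)) this
    · exact hc
  have hqM : ∀ j, q j < π p := by
    intro j
    refine lt_of_le_of_lt (hqmono.monotone ?_) claim2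
    rw [Fin.le_def]
    have := j.isLt
    simp only [hjl]
    omega
  refine contains_extBoth_of_occT ⟨hqmono, hpq, hiff, hmax⟩ hqM
    (lt_trans claim1 (hmax s)) (fun j => by rw [hMp]; exact hpv j)
    (by rw [hMp]; exact lt_trans claim1 (hmax s))

/-- if `σ` is a nonempty permutation of length `m` whose last entry is not `1`,
then `I_n(3412, (m+1)σ) = I_n(3412, (m+2)σ^{+1}1)` for all `n`. -/
theorem stmt9 (m : ℕ) (hm : 1 ≤ m) (σ : Fin m → Fin m) (hbij : Function.Bijective σ)
    (hlast : (σ ⟨m - 1, by omega⟩ : ℕ) ≠ 0) :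
    ∀ n : ℕ,
      {π : Fin n → Fin n |
        Function.Involutive π ∧ Avoids π pat3412 ∧ Avoids π (extTop σ)} =
      {π : Fin n → Fin n |
        Function.Involutive π ∧ Avoids π pat3412 ∧ Avoids π (extBoth σ)} := by
  intro n
  ext π
  simp only [Set.mem_setOf_eq]
  constructor
  · rintro ⟨h1, h2, h3⟩
    exact ⟨h1, h2, fun hc => h3 (contains_extTop_of_contains_extBoth hc)⟩
  · rintro ⟨h1, h2, h3⟩
    exact ⟨h1, h2, fun hc => h3 (hard hm h1 h2 hbij hlast hc)⟩
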